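/- Suppose g : E → ℝ → E is uniformly ℓ-Lipschitz with respect to ‖·‖_P (i.e. ‖g x t − g y t‖_P ≤ ℓ·‖x − y‖_P for all x, y ∈ E, t ≥ 0), satisfies the one-sided Lipschitz condition with rate γ̄ (with respect to ‖·‖_P) on [0, ∞), and there exists c > 0 with c ≤ γ̄(t) < ℓ for all t ≥ 0. Let 0 < h < 2·c/ℓ², let x* ∈ E satisfy g x* t = 0 for all t ≥ 0, and let y : ℕ → E satisfy the explicit Euler recursion y (k+1) = y k + h • g (y k) (k·h) for all k. Then for every k ≥ 1, ‖y k − x*‖_P ≤ (∏_{m=0}^{k−1} (1 − 2·h·γ̄(m·h) + h²·ℓ²)^(1/2)) · ‖y 0 − x*‖_P; in particular, if γ̄ is the constant function γ, then ‖y k − x*‖_P ≤ (1 − 2·h·γ + h²·ℓ²)^(k/2) · ‖y 0 − x*‖_P. -/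

import Mathlib

open Finset

/-- Weighted inner product `⟪u, P.mulVec v⟫` on Euclidean space. -/
noncomputable def wip {n : ℕ} (P : Matrix (Fin n) (Fin n) ℝ)
    (u v : EuclideanSpace ℝ (Fin n)) : ℝ :=
  ∑ i, u i * P.mulVec (fun j => v j) i

/-- Weighted norm `‖u‖_P = √⟪u, u⟫_P`. -/
noncomputable def wnorm {n : ℕ} (P : Matrix (Fin n) (Fin n) ℝ)
    (u : EuclideanSpace ℝ (Fin n)) : ℝ :=
  Real.sqrt (wip P u u)

variable {n : ℕ} (P : Matrix (Fin n) (Fin n) ℝ)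

lemma wip_eq_dot (u v : EuclideanSpace ℝ (Fin n)) :
    wip P u v = dotProduct (fun i => u i) (P.mulVec (fun j => v j)) := rfl

lemma wip_nonneg (hPpos : P.PosDef) (u : EuclideanSpace ℝ (Fin n)) : 0 ≤ wip P u u := by
  rcases eq_or_ne u 0 with h | h
  · simp [wip, h]
  · have := hPpos.dotProduct_mulVec_pos (x := fun i => u i) (by intro hc; apply h; ext i; exact congrFun hc i)
    simpa [wip_eq_dot] using this.le

lemma wip_symm (hPsymm : P.IsSymm) (u v : EuclideanSpace ℝ (Fin n)) :
    wip P u v = wip P v u := by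
  rw [wip_eq_dot, wip_eq_dot, Matrix.dotProduct_mulVec, ← Matrix.mulVec_transpose,
    hPsymm.eq, dotProduct_comm]

lemma wip_eq2 (u v : EuclideanSpace ℝ (Fin n)) :
    wip P u v = ∑ i, ∑ j, u i * P i j * v j := by
  simp [wip, Matrix.mulVec, dotProduct, Finset.mul_sum, mul_assoc]

lemma wip_expand (hPsymm : P.IsSymm) (u v : EuclideanSpace ℝ (Fin n)) (a : ℝ) :
    wip P (u + a • v) (u + a • v)
      = wip P u u + 2 * a * wip P u v + a ^ 2 * wip P v v := by
  have hsym : (∑ i, ∑ j, v i * P i j * u j) = ∑ i, ∑ j, u i * P i j * v j := by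
    rw [← wip_eq2, ← wip_eq2, wip_symm P hPsymm]
  simp only [wip_eq2, PiLp.add_apply, PiLp.smul_apply, smul_eq_mul]
  have : ∀ i, ∑ j, (u i + a * v i) * P i j * (u j + a * v j)
      = ∑ j, (u i * P i j * u j + a * (u i * P i j * v j)
        + (a * (v i * P i j * u j) + a ^ 2 * (v i * P i j * v j))) := by
    intro i; apply Finset.sum_congr rfl; intro j _; ring
  rw [Finset.sum_congr rfl (fun i _ => this i)]
  simp only [Finset.sum_add_distrib, ← Finset.mul_sum, hsym]
  ring

lemma wnorm_nonneg (u : EuclideanSpace ℝ (Fin n)) : 0 ≤ wnorm P u := Real.sqrt_nonneg _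

lemma wnorm_sq (hPpos : P.PosDef) (u : EuclideanSpace ℝ (Fin n)) :
    wnorm P u ^ 2 = wip P u u := Real.sq_sqrt (wip_nonneg P hPpos u)


theorem stmt_6 {n : ℕ} (P : Matrix (Fin n) (Fin n) ℝ)
    (hPsymm : P.IsSymm) (hPpos : P.PosDef)
    (g : EuclideanSpace ℝ (Fin n) → ℝ → EuclideanSpace ℝ (Fin n))
    (ℓ : ℝ)
    (hLip : ∀ x y : EuclideanSpace ℝ (Fin n), ∀ t : ℝ, 0 ≤ t →
      wnorm P (g x t - g y t) ≤ ℓ * wnorm P (x - y))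
    (gam : ℝ → ℝ)
    (hOSL : ∀ x y : EuclideanSpace ℝ (Fin n), ∀ t : ℝ, 0 ≤ t →
      wip P (x - y) (g x t - g y t) ≤ -gam t * (wnorm P (x - y)) ^ 2)
    (c : ℝ) (hc : 0 < c) (hgam : ∀ t : ℝ, 0 ≤ t → c ≤ gam t ∧ gam t < ℓ)
    (h : ℝ) (hh : 0 < h) (hh2 : h < 2 * c / ℓ ^ 2)
    (xs : EuclideanSpace ℝ (Fin n)) (hxs : ∀ t : ℝ, 0 ≤ t → g xs t = 0)
    (y : ℕ → EuclideanSpace ℝ (Fin n))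
    (hy : ∀ k : ℕ, y (k + 1) = y k + h • g (y k) ((k : ℝ) * h)) :
    (∀ k : ℕ, 1 ≤ k →
      wnorm P (y k - xs) ≤
        (∏ m ∈ Finset.range k,
          Real.sqrt (1 - 2 * h * gam ((m : ℝ) * h) + h ^ 2 * ℓ ^ 2)) * wnorm P (y 0 - xs)) ∧
    (∀ γ : ℝ, (∀ t : ℝ, gam t = γ) → ∀ k : ℕ, 1 ≤ k →
      wnorm P (y k - xs) ≤
        Real.sqrt (1 - 2 * h * γ + h ^ 2 * ℓ ^ 2) ^ k * wnorm P (y 0 - xs)) := by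
  -- C k is the contraction factor at step k
  set C : ℕ → ℝ := fun k => 1 - 2 * h * gam ((k : ℝ) * h) + h ^ 2 * ℓ ^ 2 with hC
  have ht : ∀ k : ℕ, (0 : ℝ) ≤ (k : ℝ) * h := fun k =>
    mul_nonneg (Nat.cast_nonneg k) hh.le
  have hCnonneg : ∀ k : ℕ, 0 ≤ C k := by
    intro k
    have h1 := (hgam _ (ht k)).2
    simp only [hC]
    nlinarith [sq_nonneg (1 - h * ℓ), hh]
  have step : ∀ k : ℕ,
      wnorm P (y (k + 1) - xs) ≤ Real.sqrt (C k) * wnorm P (y k - xs) := by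
    intro k
    set t := (k : ℝ) * h
    set u := y k - xs
    set v := g (y k) t
    have hv : v = g (y k) t - g xs t := by rw [hxs t (ht k), sub_zero]
    have hstep : y (k + 1) - xs = u + h • v := by
      rw [hy k]; simp [u, v]; abel
    have hwipuu : wip P u u = wnorm P u ^ 2 := (wnorm_sq P hPpos u).symm
    have h1 : wip P u v ≤ -gam t * wnorm P u ^ 2 := by
      rw [hv]; exact hOSL _ _ t (ht k)
    have h2 : wip P v v ≤ ℓ ^ 2 * wnorm P u ^ 2 := by
      have := hLip (y k) xs t (ht k)
      rw [← hv] at this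
      have := mul_self_le_mul_self (wnorm_nonneg P v) this
      rw [← wnorm_sq P hPpos v] at *
      nlinarith [this]
    have key : wip P (y (k + 1) - xs) (y (k + 1) - xs) ≤ C k * wnorm P u ^ 2 := by
      rw [hstep, wip_expand P hPsymm, hwipuu]
      simp only [hC]
      have hh2' : 0 < h ^ 2 := by positivity
      nlinarith [h1, h2, hh]
    have : wnorm P (y (k + 1) - xs) ≤ Real.sqrt (C k * wnorm P u ^ 2) := by
      unfold wnorm
      exact Real.sqrt_le_sqrt key
    rw [Real.sqrt_mul (hCnonneg k), Real.sqrt_sq (wnorm_nonneg P u)] at this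
    exact this
  have main : ∀ k : ℕ,
      wnorm P (y k - xs) ≤ (∏ m ∈ Finset.range k, Real.sqrt (C m)) * wnorm P (y 0 - xs) := by
    intro k
    induction k with
    | zero => simp
    | succ k ih =>
      calc wnorm P (y (k + 1) - xs) ≤ Real.sqrt (C k) * wnorm P (y k - xs) := step k
        _ ≤ Real.sqrt (C k) * ((∏ m ∈ Finset.range k, Real.sqrt (C m)) * wnorm P (y 0 - xs)) :=
          mul_le_mul_of_nonneg_left ih (Real.sqrt_nonneg _)
        _ = (∏ m ∈ Finset.range (k + 1), Real.sqrt (C m)) * wnorm P (y 0 - xs) := by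
          rw [Finset.prod_range_succ]; ring
  refine ⟨fun k _ => main k, fun γ hγ k _ => ?_⟩
  have := main k
  simp only [hC, hγ] at this
  simpa [Finset.prod_const] using this
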